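/- Let q ≥ 2 and let r, s, t, u be integers. Define Ω_{r,s,t,u} = {(i,j,k) ∈ ℤ³ : −r ≤ i, −s ≤ i + (q²+q)k < −s + (q²+q), −t ≤ qi + (q²+q)j + (q+1)k < −t + (q²+q), −u ≤ −q²i − (q³−q)j − (q³+q²−q−1)k}. Then there exists a constant R depending only on q, s, t, u such that for all r ≥ R, #Ω_{r,s,t,u} = 1 − (q³ − 2q + 1) + r + (q−1)s + (q−1)t + u. -/
import Mathlib

def kk (q s i : ℤ) : ℤ := -((i+s)/(q^2+q))
def AA (q s i : ℤ) : ℤ := (i+s) % (q^2+q) - s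
def ww (q s t i : ℤ) : ℤ := q*i + (q+1)*(kk q s i) + t
def jj (q s t i : ℤ) : ℤ := -((ww q s t i)/(q^2+q))
def BB (q s t i : ℤ) : ℤ := (ww q s t i) % (q^2+q) - t
def ff (q s t i : ℤ) : ℤ := i + (q-1)*(AA q s i + BB q s t i)

lemma hMpos {q : ℤ} (hq : 2 ≤ q) : (0:ℤ) < q^2+q := by nlinarith

lemma AA_eq (q s i : ℤ) : AA q s i = i + (q^2+q) * kk q s i := by
  unfold AA kk; rw [Int.emod_def]; ring

lemma AA_bounds {q : ℤ} (hq : 2 ≤ q) (s i : ℤ) :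
    0 ≤ AA q s i + s ∧ AA q s i + s < q^2+q := by
  unfold AA
  constructor
  · have := Int.emod_nonneg (i+s) (hMpos hq).ne'
    omega
  · have := Int.emod_lt_of_pos (i+s) (hMpos hq)
    omega

lemma BB_eq (q s t i : ℤ) :
    BB q s t i = q*i + (q^2+q) * jj q s t i + (q+1) * kk q s i := by
  unfold BB jj; rw [Int.emod_def]; unfold ww; ring

lemma BB_bounds {q : ℤ} (hq : 2 ≤ q) (s t i : ℤ) :
    0 ≤ BB q s t i + t ∧ BB q s t i + t < q^2+q := by
  unfold BB
  constructor
  · have := Int.emod_nonneg (ww q s t i) (hMpos hq).ne'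
    omega
  · have := Int.emod_lt_of_pos (ww q s t i) (hMpos hq)
    omega

lemma ff_spec (q s t i : ℤ) :
    q^2*i + (q^3-q)*(jj q s t i) + (q^3+q^2-q-1)*(kk q s i) = ff q s t i := by
  have hA := AA_eq q s i
  have hB := BB_eq q s t i
  unfold ff
  linear_combination (-(q-1)) * hA + (-(q-1)) * hB

lemma ff_bounds {q : ℤ} (hq : 2 ≤ q) (s t u i : ℤ) :
    i + (q-1)*(-s-t) ≤ ff q s t i ∧
    ff q s t i ≤ i + (q-1)*(-s-t) + 2*(q-1)*(q^2+q-1) := by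
  have hA := AA_bounds hq s i
  have hB := BB_bounds hq s t i
  unfold ff
  constructor <;> nlinarith [hA.1, hA.2, hB.1, hB.2]

lemma kk_uniq {q : ℤ} (hq : 2 ≤ q) {s i k' : ℤ}
    (h1 : -s ≤ i + (q^2+q)*k') (h2 : i + (q^2+q)*k' < -s + (q^2+q)) :
    k' = kk q s i := by
  have hA := AA_bounds hq s i
  have hAe := AA_eq q s i
  have hM := hMpos hq
  rcases lt_trichotomy k' (kk q s i) with h | h | h
  · nlinarith [mul_le_mul_of_nonneg_left (by omega : k' + 1 ≤ kk q s i) hM.le]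
  · exact h
  · nlinarith [mul_le_mul_of_nonneg_left (by omega : kk q s i + 1 ≤ k') hM.le]

lemma jj_uniq {q : ℤ} (hq : 2 ≤ q) {s t i j' : ℤ}
    (h1 : -t ≤ q*i + (q^2+q)*j' + (q+1)*(kk q s i))
    (h2 : q*i + (q^2+q)*j' + (q+1)*(kk q s i) < -t + (q^2+q)) :
    j' = jj q s t i := by
  have hB := BB_bounds hq s t i
  have hBe := BB_eq q s t i
  have hM := hMpos hq
  rcases lt_trichotomy j' (jj q s t i) with h | h | h
  · nlinarith [mul_le_mul_of_nonneg_left (by omega : j' + 1 ≤ jj q s t i) hM.le]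
  · exact h
  · nlinarith [mul_le_mul_of_nonneg_left (by omega : jj q s t i + 1 ≤ j') hM.le]
set_option maxHeartbeats 1000000
-- assume chunk1 present: concatenated at test time

lemma mul_small {m X : ℤ} (hm : 0 < m) (h1 : -m < m*X) (h2 : m*X < m) : X = 0 := by
  rcases lt_trichotomy X 0 with h|h|h
  · nlinarith
  · exact h
  · nlinarith

lemma kk_shiftM {q : ℤ} (hq : 2 ≤ q) (s i m : ℤ) :
    kk q s (i + (q^2+q)*m) = kk q s i - m := by
  unfold kk
  have h1 : i + (q^2+q)*m + s = (i+s) + (q^2+q)*m := by ring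
  rw [h1, Int.add_mul_ediv_left _ _ (hMpos hq).ne']
  ring

lemma AA_shiftM (q s i m : ℤ) : AA q s (i + (q^2+q)*m) = AA q s i := by
  unfold AA
  have h1 : i + (q^2+q)*m + s = (i+s) + (q^2+q)*m := by ring
  rw [h1, Int.add_mul_emod_self_left]

lemma wwmod_shiftM {q : ℤ} (hq : 2 ≤ q) (s t i m : ℤ) :
    ww q s t (i + (q^2+q)*m) % (q^2+q) = (ww q s t i - (q+1)*m) % (q^2+q) := by
  unfold ww
  rw [kk_shiftM hq]
  have h1 : q*(i + (q^2+q)*m) + (q+1)*(kk q s i - m) + t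
      = (q*i + (q+1)*(kk q s i) + t - (q+1)*m) + (q^2+q)*(q*m) := by ring
  rw [h1, Int.add_mul_emod_self_left]

lemma AA_shiftP (q s i n : ℤ) : AA q s (i + (q^3+q^2)*n) = AA q s i := by
  have h1 : i + (q^3+q^2)*n = i + (q^2+q)*(q*n) := by ring
  rw [h1, AA_shiftM]

lemma BB_shiftP {q : ℤ} (hq : 2 ≤ q) (s t i n : ℤ) :
    BB q s t (i + (q^3+q^2)*n) = BB q s t i := by
  unfold BB
  have h1 : i + (q^3+q^2)*n = i + (q^2+q)*(q*n) := by ring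
  rw [h1, wwmod_shiftM hq]
  have h2 : ww q s t i - (q+1)*(q*n) = ww q s t i + (q^2+q)*(-n) := by ring
  rw [h2, Int.add_mul_emod_self_left]

lemma ff_shiftP {q : ℤ} (hq : 2 ≤ q) (s t i n : ℤ) :
    ff q s t (i + (q^3+q^2)*n) = ff q s t i + (q^3+q^2)*n := by
  unfold ff
  rw [AA_shiftP, BB_shiftP hq]
  ring

lemma ff_inj {q : ℤ} (hq : 2 ≤ q) (s t : ℤ) {x y : ℤ}
    (hxy1 : -(q^3+q^2) < x - y) (hxy2 : x - y < q^3+q^2)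
    (hmod : ff q s t x % (q^3+q^2) = ff q s t y % (q^3+q^2)) : x = y := by
  have hM := hMpos hq
  have hP : (0:ℤ) < q^3+q^2 := by nlinarith
  have hqpos : (0:ℤ) < q := by omega
  obtain ⟨n, hn⟩ : (q^3+q^2) ∣ (ff q s t x - ff q s t y) :=
    Int.dvd_of_emod_eq_zero (Int.emod_eq_emod_iff_emod_sub_eq_zero.mp hmod)
  unfold ff at hn
  have hAx := AA_bounds hq s x
  have hAy := AA_bounds hq s y
  have hBx := BB_bounds hq s t x
  have hBy := BB_bounds hq s t y
  set d := x - y with hd0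
  set dk := kk q s x - kk q s y with hdk0
  set dj := jj q s t x - jj q s t y with hdj0
  set a := AA q s x - AA q s y with ha0
  set b := BB q s t x - BB q s t y with hb0
  have H1 : a = d + (q^2+q)*dk := by
    rw [ha0, hd0, hdk0]; linear_combination (AA_eq q s x) - (AA_eq q s y)
  have H2 : b = q*d + (q^2+q)*dj + (q+1)*dk := by
    rw [hb0, hd0, hdj0, hdk0]; linear_combination (BB_eq q s t x) - (BB_eq q s t y)
  have H3 : d + (q-1)*(a+b) = (q^3+q^2)*n := by
    rw [ha0, hb0, hd0]; linear_combination hn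
  have hab1 : -(q^2+q) < a := by rw [ha0]; linarith [hAx.1, hAy.2]
  have hab2 : a < q^2+q := by rw [ha0]; linarith [hAx.2, hAy.1]
  have hbb1 : -(q^2+q) < b := by rw [hb0]; linarith [hBx.1, hBy.2]
  have hbb2 : b < q^2+q := by rw [hb0]; linarith [hBx.2, hBy.1]
  set E := d + dk + q*dk + q*dj with hE
  have hab : a + b = (q+1)*E := by rw [hE]; linear_combination H1 + H2
  set D := q^2*n - (q-1)*E with hD
  have hdd : d = (q+1)*D := by rw [hD]; linear_combination H3 - (q-1)*hab
  set a1 := D + q*dk with ha1d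
  have ha1 : a = (q+1)*a1 := by rw [ha1d]; linear_combination H1 + hdd
  have hqq : (q+1)*q = q^2+q := by ring
  have hqq2 : (q+1)*(-q) = -(q^2+q) := by ring
  have ha1u : a1 < q := by
    have h5 : (q+1)*a1 < (q+1)*q := by rw [← ha1, hqq]; exact hab2
    exact lt_of_mul_lt_mul_left h5 (by omega)
  have ha1l : -q < a1 := by
    have h5 : (q+1)*(-q) < (q+1)*a1 := by rw [← ha1, hqq2]; exact hab1
    exact lt_of_mul_lt_mul_left h5 (by omega)
  set b1 := E - a1 with hb1d
  have hb1 : b = (q+1)*b1 := by rw [hb1d]; linear_combination hab - ha1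
  have hb1u : b1 < q := by
    have h5 : (q+1)*b1 < (q+1)*q := by rw [← hb1, hqq]; exact hbb2
    exact lt_of_mul_lt_mul_left h5 (by omega)
  have hb1l : -q < b1 := by
    have h5 : (q+1)*(-q) < (q+1)*b1 := by rw [← hb1, hqq2]; exact hbb1
    exact lt_of_mul_lt_mul_left h5 (by omega)
  have hq1 : b1 = q*(E - q*n - dk) := by rw [hb1d, ha1d, hD]; ring
  have hz : E - q*n - dk = 0 := by
    apply mul_small hqpos
    · rw [← hq1]; linarith
    · rw [← hq1]; linarith
  have hb1z : b1 = 0 := by rw [hq1, hz, mul_zero]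
  have hbz : b = 0 := by rw [hb1, hb1z, mul_zero]
  have hEa : E = a1 := by
    have h6 := hb1d
    rw [hb1z] at h6
    linarith [h6]
  have hk5 : (q+1)*(q*D + q*dj + dk) = 0 := by
    linear_combination (-1)*H2 + hbz + (-q)*hdd
  have hk6 : q*D + q*dj + dk = 0 :=
    (mul_eq_zero.mp hk5).resolve_left (by omega)
  have ha2 : a1 = q*n + dk := by linarith [hz, hEa]
  have ha3 : a1 = q*(n - D - dj) := by linear_combination ha2 + hk6
  have hz2 : n - D - dj = 0 := by
    apply mul_small hqpos
    · rw [← ha3]; linarith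
    · rw [← ha3]; linarith
  have ha1z : a1 = 0 := by rw [ha3, hz2, mul_zero]
  have hEz : E = 0 := by rw [hEa, ha1z]
  have hdn : d = (q^3+q^2)*n := by rw [hdd, hD, hEz]; ring
  have hn0 : n = 0 := by
    apply mul_small hP
    · rw [← hdn]; exact hxy1
    · rw [← hdn]; exact hxy2
  have : d = 0 := by rw [hdn, hn0, mul_zero]
  omega

lemma sum_emod_bij {m : ℤ} (hm : 0 < m) (c : ℤ) (g : ℤ → ℤ)
    (hinj : ∀ x ∈ Finset.Ico c (c+m), ∀ y ∈ Finset.Ico c (c+m), g x % m = g y % m → x = y) :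
    ∑ x ∈ Finset.Ico c (c+m), g x % m = ∑ x ∈ Finset.Ico 0 m, x := by
  have himg : (Finset.Ico c (c+m)).image (fun x => g x % m) = Finset.Ico 0 m := by
    apply Finset.eq_of_subset_of_card_le
    · intro z hz
      simp only [Finset.mem_image] at hz
      obtain ⟨x, hx, rfl⟩ := hz
      simp only [Finset.mem_Ico]
      exact ⟨Int.emod_nonneg _ hm.ne', Int.emod_lt_of_pos _ hm⟩
    · rw [Finset.card_image_of_injOn
        (fun x hx y hy h => hinj x (Finset.mem_coe.mp hx) y (Finset.mem_coe.mp hy) h)]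
      simp only [Int.card_Ico]
      omega
  calc ∑ x ∈ Finset.Ico c (c+m), g x % m
      = ∑ z ∈ (Finset.Ico c (c+m)).image (fun x => g x % m), z := (Finset.sum_image (f := fun z => z) hinj).symm
    _ = ∑ x ∈ Finset.Ico 0 m, x := by rw [himg]

lemma sum_shift_interval (F : ℤ → ℤ) (a b v : ℤ) :
    ∑ x ∈ Finset.Ico (a+v) (b+v), F x = ∑ x ∈ Finset.Ico a b, F (x+v) := by
  rw [← Finset.map_add_right_Ico a b v, Finset.sum_map]
  rfl

lemma Ico_insert_top (c n : ℤ) (hn : 0 ≤ n) :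
    Finset.Ico c (c+n+1) = insert (c+n) (Finset.Ico c (c+n)) := by
  ext x
  simp only [Finset.mem_Ico, Finset.mem_insert]
  omega

lemma sum_blocks (F : ℤ → ℤ) (c L : ℤ) (hL : 0 ≤ L) (n : ℕ) :
    ∑ x ∈ Finset.Ico c (c+(n:ℤ)*L), F x
      = ∑ m ∈ Finset.range n, ∑ x ∈ Finset.Ico c (c+L), F (x+(m:ℤ)*L) := by
  induction n with
  | zero => simp
  | succ n ih =>
    have h1 : c ≤ c + (n:ℤ)*L := by nlinarith [hL]
    have h2 : c + (n:ℤ)*L ≤ c + ((n:ℤ)+1)*L := by nlinarith [hL]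
    have hsplit : Finset.Ico c (c+((n:ℤ)+1)*L) =
        Finset.Ico c (c+(n:ℤ)*L) ∪ Finset.Ico (c+(n:ℤ)*L) (c+((n:ℤ)+1)*L) := by
      rw [Finset.Ico_union_Ico_eq_Ico h1 h2]
    push_cast
    rw [hsplit, Finset.sum_union (Finset.Ico_disjoint_Ico_consecutive _ _ _), ih,
      Finset.sum_range_succ]
    congr 1
    have h3 : c + ((n:ℤ)+1)*L = (c + L) + (n:ℤ)*L := by ring
    rw [h3]
    exact sum_shift_interval F c (c+L) ((n:ℤ)*L)

lemma two_sum_Ico (n : ℕ) : 2 * (∑ x ∈ Finset.Ico (0:ℤ) (n:ℤ), x) = (n:ℤ)*((n:ℤ)-1) := by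
  induction n with
  | zero => simp
  | succ n ih =>
    have h0 : ((n:ℤ)+1) = 0 + (n:ℤ) + 1 := by ring
    have h1 : Finset.Ico (0:ℤ) ((n:ℤ)+1) = insert ((0:ℤ)+n) (Finset.Ico (0:ℤ) (0+(n:ℤ))) := by
      rw [h0]; exact Ico_insert_top 0 n (by positivity)
    push_cast
    rw [h1, Finset.sum_insert (by simp)]
    simp only [zero_add] at *
    ring_nf
    ring_nf at ih
    linarith [ih]

lemma two_gauss (m : ℤ) (hm : 0 ≤ m) :
    2 * (∑ x ∈ Finset.Ico (0:ℤ) m, x) = m*(m-1) := by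
  obtain ⟨n, rfl⟩ := Int.eq_ofNat_of_zero_le hm
  exact two_sum_Ico n

lemma sum_id_Ico (c m : ℤ) (hm : 0 ≤ m) :
    ∑ x ∈ Finset.Ico c (c+m), x = m*c + ∑ x ∈ Finset.Ico 0 m, x := by
  have h := sum_shift_interval (fun x => x) 0 m c
  rw [zero_add] at h
  rw [show c + m = m + c by ring, h, Finset.sum_add_distrib, Finset.sum_const,
    Int.card_Ico, nsmul_eq_mul]
  rw [show (((m - 0).toNat : ℤ)) = m by omega]
  ring
lemma ap_sum {q : ℤ} (hq : 2 ≤ q) (w : ℤ) :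
    ∑ m ∈ Finset.range q.toNat, ((w - (m:ℤ)*(q+1)) % (q^2+q))
      = q*(w % (q+1)) + (q+1)*(∑ x ∈ Finset.Ico (0:ℤ) q, x) := by
  have hM := hMpos hq
  have hq1 : (0:ℤ) < q+1 := by omega
  set cf : ℕ → ℤ := fun m => ((w - (m:ℤ)*(q+1)) % (q^2+q) - w % (q+1)) / (q+1) with hcf
  have hdvd : ∀ m : ℕ, (q+1) ∣ ((w - (m:ℤ)*(q+1)) % (q^2+q) - w % (q+1)) := by
    intro m
    refine ⟨-(q * ((w - (m:ℤ)*(q+1))/(q^2+q))) + (w/(q+1)) - m, ?_⟩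
    rw [Int.emod_def, Int.emod_def]; ring
  have hc : ∀ m : ℕ, (w - (m:ℤ)*(q+1)) % (q^2+q) = w % (q+1) + (q+1)*cf m := by
    intro m
    have h2 := Int.ediv_mul_cancel (hdvd m)
    simp only [hcf]
    linarith [h2]
  have hlow : ∀ m : ℕ, 0 ≤ cf m := by
    intro m
    have h3 := Int.emod_nonneg (w - (m:ℤ)*(q+1)) hM.ne'
    have h4 := Int.emod_lt_of_pos w hq1
    have h5 : (q+1)*(-1) < (q+1)*cf m := by linarith [hc m]
    have h6 := lt_of_mul_lt_mul_left h5 (by omega : (0:ℤ) ≤ q+1)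
    omega
  have hhigh : ∀ m : ℕ, cf m < q := by
    intro m
    have h3 := Int.emod_lt_of_pos (w - (m:ℤ)*(q+1)) hM
    have h4 := Int.emod_nonneg w hq1.ne'
    have hrr : (q+1)*q = q^2+q := by ring
    have h5 : (q+1)*cf m < (q+1)*q := by linarith [hc m]
    exact lt_of_mul_lt_mul_left h5 (by omega)
  have hinj : ∀ x ∈ Finset.range q.toNat, ∀ y ∈ Finset.range q.toNat, cf x = cf y → x = y := by
    intro m hm m' hm' hmm
    simp only [Finset.mem_range] at hm hm'
    have hy : (w - (m:ℤ)*(q+1)) % (q^2+q) = (w - (m':ℤ)*(q+1)) % (q^2+q) := by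
      rw [hc m, hc m', hmm]
    obtain ⟨e, he⟩ := Int.dvd_of_emod_eq_zero (Int.emod_eq_emod_iff_emod_sub_eq_zero.mp hy)
    have he2 : ((m':ℤ) - m) = q * e := by
      have h7 : (q+1)*((m':ℤ) - m - q*e) = 0 := by linear_combination he
      have h8 := (mul_eq_zero.mp h7).resolve_left (by omega : (q+1:ℤ) ≠ 0)
      linarith
    have hm2 : ((m:ℤ)) < q := by omega
    have hm2' : ((m':ℤ)) < q := by omega
    have he0 : e = 0 := by
      apply mul_small (show (0:ℤ) < q by omega)
      · rw [← he2]; omega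
      · rw [← he2]; omega
    rw [he0, mul_zero] at he2
    omega
  have himg : (Finset.range q.toNat).image cf = Finset.Ico 0 q := by
    apply Finset.eq_of_subset_of_card_le
    · intro z hz
      simp only [Finset.mem_image] at hz
      obtain ⟨m, hm, rfl⟩ := hz
      simp only [Finset.mem_Ico]
      exact ⟨hlow m, hhigh m⟩
    · rw [Finset.card_image_of_injOn
        (fun x hx y hy h => hinj x (Finset.mem_coe.mp hx) y (Finset.mem_coe.mp hy) h)]
      simp only [Int.card_Ico, Finset.card_range]
      omega
  have hsum : ∑ m ∈ Finset.range q.toNat, cf m = ∑ x ∈ Finset.Ico (0:ℤ) q, x := by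
    rw [← himg, Finset.sum_image (f := fun z => z) hinj]
  calc ∑ m ∈ Finset.range q.toNat, ((w - (m:ℤ)*(q+1)) % (q^2+q))
      = ∑ m ∈ Finset.range q.toNat, (w % (q+1) + (q+1)*cf m) :=
        Finset.sum_congr rfl (fun m _ => hc m)
    _ = (q.toNat : ℤ) * (w % (q+1)) + (q+1) * ∑ m ∈ Finset.range q.toNat, cf m := by
        rw [Finset.sum_add_distrib, Finset.sum_const, Finset.card_range, nsmul_eq_mul,
          ← Finset.mul_sum]
    _ = q*(w % (q+1)) + (q+1)*(∑ x ∈ Finset.Ico (0:ℤ) q, x) := by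
        rw [hsum, show ((q.toNat:ℕ):ℤ) = q by omega]
lemma emod_inj_of_small {m : ℤ} (hm : 0 < m) {x y e : ℤ} (hx1 : -m < x - y) (hx2 : x - y < m)
    (h : (x+e) % m = (y+e) % m) : x = y := by
  obtain ⟨d, hd⟩ := Int.dvd_of_emod_eq_zero (Int.emod_eq_emod_iff_emod_sub_eq_zero.mp h)
  have hd2 : x - y = m*d := by linarith
  have hd0 : d = 0 := mul_small hm (by rw [← hd2]; exact hx1) (by rw [← hd2]; exact hx2)
  rw [hd0, mul_zero] at hd2
  linarith

lemma emod_inj_neg {m : ℤ} (hm : 0 < m) {x y e : ℤ} (hx1 : -m < x - y) (hx2 : x - y < m)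
    (h : (e-x) % m = (e-y) % m) : x = y := by
  obtain ⟨d, hd⟩ := Int.dvd_of_emod_eq_zero (Int.emod_eq_emod_iff_emod_sub_eq_zero.mp h)
  have hd2 : x - y = m*(-d) := by linarith
  have hd0 : -d = 0 := mul_small hm (by rw [← hd2]; exact hx1) (by rw [← hd2]; exact hx2)
  rw [hd0, mul_zero] at hd2
  linarith

lemma sumA {q : ℤ} (hq : 2 ≤ q) (s c : ℤ) :
    ∑ ρ ∈ Finset.Ico c (c + (q^3+q^2)), AA q s ρ
      = q * (∑ x ∈ Finset.Ico (0:ℤ) (q^2+q), x) - (q^3+q^2)*s := by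
  have hM := hMpos hq
  have hPM : c + (q^3+q^2) = c + ((q.toNat:ℕ):ℤ)*(q^2+q) := by
    rw [show ((q.toNat:ℕ):ℤ) = q by omega]; ring
  rw [hPM, sum_blocks _ c _ hM.le q.toNat]
  have hinner : ∀ m : ℕ, ∑ x ∈ Finset.Ico c (c+(q^2+q)), AA q s (x + (m:ℤ)*(q^2+q))
      = (∑ x ∈ Finset.Ico (0:ℤ) (q^2+q), x) - (q^2+q)*s := by
    intro m
    have h1 : ∀ x : ℤ, AA q s (x + (m:ℤ)*(q^2+q)) = AA q s x := by
      intro x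
      rw [show x + (m:ℤ)*(q^2+q) = x + (q^2+q)*(m:ℤ) by ring, AA_shiftM]
    rw [Finset.sum_congr rfl (fun x _ => h1 x)]
    unfold AA
    rw [Finset.sum_sub_distrib, Finset.sum_const, Int.card_Ico, nsmul_eq_mul,
      show (((c+(q^2+q)-c).toNat:ℕ):ℤ) = q^2+q by omega]
    congr 1
    exact sum_emod_bij hM c (fun x => x + s) (fun x hx y hy h => by
      simp only [Finset.mem_Ico] at hx hy
      exact emod_inj_of_small hM (by linarith) (by linarith) h)
  rw [Finset.sum_congr rfl (fun m _ => hinner m), Finset.sum_const, Finset.card_range,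
    nsmul_eq_mul, show ((q.toNat:ℕ):ℤ) = q by omega]
  ring

lemma sumT {q : ℤ} (hq : 2 ≤ q) (t c : ℤ) :
    ∑ x ∈ Finset.Ico c (c + (q^2+q)), ((t - x) % (q+1))
      = q * (∑ x ∈ Finset.Ico (0:ℤ) (q+1), x) := by
  have hq1 : (0:ℤ) < q+1 := by omega
  have hPM : c + (q^2+q) = c + ((q.toNat:ℕ):ℤ)*(q+1) := by
    rw [show ((q.toNat:ℕ):ℤ) = q by omega]; ring
  rw [hPM, sum_blocks _ c _ hq1.le q.toNat]
  have hinner : ∀ m : ℕ, ∑ x ∈ Finset.Ico c (c+(q+1)), ((t - (x + (m:ℤ)*(q+1))) % (q+1))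
      = ∑ x ∈ Finset.Ico (0:ℤ) (q+1), x := by
    intro m
    have h1 : ∀ x : ℤ, (t - (x + (m:ℤ)*(q+1))) % (q+1) = (t - x) % (q+1) := by
      intro x
      rw [show t - (x + (m:ℤ)*(q+1)) = (t - x) + (q+1)*(-(m:ℤ)) by ring,
        Int.add_mul_emod_self_left]
    rw [Finset.sum_congr rfl (fun x _ => h1 x)]
    exact sum_emod_bij hq1 c (fun x => t - x) (fun x hx y hy h => by
      simp only [Finset.mem_Ico] at hx hy
      exact emod_inj_neg hq1 (by linarith) (by linarith) h)
  rw [Finset.sum_congr rfl (fun m _ => hinner m), Finset.sum_const, Finset.card_range,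
    nsmul_eq_mul, show ((q.toNat:ℕ):ℤ) = q by omega]

lemma sumWW {q : ℤ} (hq : 2 ≤ q) (s t c : ℤ) :
    ∑ ρ ∈ Finset.Ico c (c + (q^3+q^2)), (ww q s t ρ % (q^2+q))
      = q*(q * (∑ x ∈ Finset.Ico (0:ℤ) (q+1), x))
        + (q^2+q)*((q+1)*(∑ x ∈ Finset.Ico (0:ℤ) q, x)) := by
  have hM := hMpos hq
  have hq1 : (0:ℤ) < q+1 := by omega
  have hPM : c + (q^3+q^2) = c + ((q.toNat:ℕ):ℤ)*(q^2+q) := by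
    rw [show ((q.toNat:ℕ):ℤ) = q by omega]; ring
  rw [hPM, sum_blocks _ c _ hM.le q.toNat]
  have hshift : ∀ (m : ℕ) (x : ℤ),
      ww q s t (x + (m:ℤ)*(q^2+q)) % (q^2+q) = (ww q s t x - (m:ℤ)*(q+1)) % (q^2+q) := by
    intro m x
    rw [show x + (m:ℤ)*(q^2+q) = x + (q^2+q)*(m:ℤ) by ring, wwmod_shiftM hq,
      show ww q s t x - (q+1)*(m:ℤ) = ww q s t x - (m:ℤ)*(q+1) by ring]
  rw [Finset.sum_congr rfl (fun m _ => Finset.sum_congr rfl (fun x _ => hshift m x))]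
  rw [Finset.sum_comm]
  have hx1 : ∀ x : ℤ, ∑ m ∈ Finset.range q.toNat, ((ww q s t x - (m:ℤ)*(q+1)) % (q^2+q))
      = q*((t - x) % (q+1)) + (q+1)*(∑ z ∈ Finset.Ico (0:ℤ) q, z) := by
    intro x
    rw [ap_sum hq (ww q s t x)]
    congr 2
    apply Int.emod_eq_emod_iff_emod_sub_eq_zero.mpr
    apply Int.emod_eq_zero_of_dvd
    exact ⟨x + kk q s x, by unfold ww; ring⟩
  rw [Finset.sum_congr rfl (fun x _ => hx1 x), Finset.sum_add_distrib, Finset.sum_const,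
    Int.card_Ico, nsmul_eq_mul, show (((c+(q^2+q)-c).toNat:ℕ):ℤ) = q^2+q by omega,
    ← Finset.mul_sum, sumT hq t c]
lemma sum_ff {q : ℤ} (hq : 2 ≤ q) (s t c : ℤ) :
    ∑ ρ ∈ Finset.Ico c (c + (q^3+q^2)), ff q s t ρ
      = ((q^3+q^2)*c + ∑ x ∈ Finset.Ico (0:ℤ) (q^3+q^2), x)
        + (q-1)*((q * (∑ x ∈ Finset.Ico (0:ℤ) (q^2+q), x) - (q^3+q^2)*s)
          + (q*(q * (∑ x ∈ Finset.Ico (0:ℤ) (q+1), x))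
             + (q^2+q)*((q+1)*(∑ x ∈ Finset.Ico (0:ℤ) q, x)) - (q^3+q^2)*t)) := by
  have hM := hMpos hq
  have hP : (0:ℤ) < q^3+q^2 := by nlinarith
  have h1 : ∀ ρ : ℤ, ff q s t ρ
      = ρ + ((q-1)*AA q s ρ + ((q-1)*(ww q s t ρ % (q^2+q)) + (-((q-1)*t)))) := by
    intro ρ; unfold ff BB; ring
  rw [Finset.sum_congr rfl (fun ρ _ => h1 ρ)]
  simp only [Finset.sum_add_distrib]
  rw [← Finset.mul_sum, ← Finset.mul_sum, Finset.sum_const, Int.card_Ico, nsmul_eq_mul,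
    show (((c+(q^3+q^2)-c).toNat:ℕ):ℤ) = q^3+q^2 from by
      rw [show c+(q^3+q^2)-c = q^3+q^2 from by ring, Int.toNat_of_nonneg hP.le],
    sumA hq s c, sumWW hq s t c, sum_id_Ico c _ hP.le]
  ring

lemma sum_modP {q : ℤ} (hq : 2 ≤ q) (s t u c : ℤ) :
    ∑ ρ ∈ Finset.Ico c (c + (q^3+q^2)), ((u - ff q s t ρ) % (q^3+q^2))
      = ∑ x ∈ Finset.Ico (0:ℤ) (q^3+q^2), x := by
  have hP : (0:ℤ) < q^3+q^2 := by nlinarith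
  apply sum_emod_bij hP c (fun ρ => u - ff q s t ρ)
  intro x hx y hy h
  simp only [Finset.mem_Ico] at hx hy
  obtain ⟨d, hd⟩ := Int.dvd_of_emod_eq_zero (Int.emod_eq_emod_iff_emod_sub_eq_zero.mp h)
  refine ff_inj hq s t (x := x) (y := y) (by linarith) (by linarith) ?_
  apply Int.emod_eq_emod_iff_emod_sub_eq_zero.mpr
  apply Int.emod_eq_zero_of_dvd
  exact ⟨-d, by linarith⟩

/-- The lattice point set Ω_{r,s,t,u}: (i,j,k) with −r ≤ i,
    −s ≤ i+(q²+q)k < −s+(q²+q), −t ≤ qi+(q²+q)j+(q+1)k < −t+(q²+q),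
    −u ≤ −q²i−(q³−q)j−(q³+q²−q−1)k. -/
def Omega (q r s t u : ℤ) : Set (ℤ × ℤ × ℤ) :=
  {p | -r ≤ p.1 ∧
       -s ≤ p.1 + (q ^ 2 + q) * p.2.2 ∧
       p.1 + (q ^ 2 + q) * p.2.2 < -s + (q ^ 2 + q) ∧
       -t ≤ q * p.1 + (q ^ 2 + q) * p.2.1 + (q + 1) * p.2.2 ∧
       q * p.1 + (q ^ 2 + q) * p.2.1 + (q + 1) * p.2.2 < -t + (q ^ 2 + q) ∧
       -u ≤ -q ^ 2 * p.1 - (q ^ 3 - q) * p.2.1 - (q ^ 3 + q ^ 2 - q - 1) * p.2.2}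

/-- There is a constant R (depending on q, s, t, u) such that for all r ≥ R,
    #Ω_{r,s,t,u} = 1 − g + r + (q−1)s + (q−1)t + u, where g = q³−2q+1. -/
theorem stmt_13 (q s t u : ℤ) (hq : 2 ≤ q) :
    ∃ R : ℤ, ∀ r : ℤ, R ≤ r →
      ((Omega q r s t u).ncard : ℤ)
        = 1 - (q ^ 3 - 2 * q + 1) + r + (q - 1) * s + (q - 1) * t + u := by
  have hM := hMpos hq
  have hP : (0:ℤ) < q^3+q^2 := by nlinarith
  refine ⟨(q^3+q^2) + (q-1)*(-s-t) + 2*(q-1)*(q^2+q-1) - u, ?_⟩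
  intro r hr
  set T : Finset ℤ := (Finset.Ico (-r) (-r + (q^3+q^2))).biUnion
      (fun ρ => (Finset.Icc (0:ℤ) ((u - ff q s t ρ)/(q^3+q^2))).image
        (fun n => ρ + n*(q^3+q^2))) with hT
  have hffu : ∀ ρ ∈ Finset.Ico (-r) (-r + (q^3+q^2)), ff q s t ρ ≤ u := by
    intro ρ hρ
    simp only [Finset.mem_Ico] at hρ
    have hb := (ff_bounds hq s t u ρ).2
    linarith [hρ.2]
  have hmemT : ∀ i : ℤ, i ∈ T ↔ (-r ≤ i ∧ ff q s t i ≤ u) := by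
    intro i
    rw [hT]
    simp only [Finset.mem_biUnion, Finset.mem_image, Finset.mem_Icc, Finset.mem_Ico]
    constructor
    · rintro ⟨ρ, ⟨hρ1, hρ2⟩, n, ⟨hn0, hn1⟩, rfl⟩
      have hnP : 0 ≤ n*(q^3+q^2) := mul_nonneg hn0 hP.le
      have hffs : ff q s t (ρ + n*(q^3+q^2)) = ff q s t ρ + (q^3+q^2)*n := by
        rw [show ρ + n*(q^3+q^2) = ρ + (q^3+q^2)*n from by ring]
        exact ff_shiftP hq s t ρ n
      have h8 := (Int.le_ediv_iff_mul_le hP).mp hn1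
      exact ⟨by linarith, by linarith⟩
    · rintro ⟨h1, h2⟩
      refine ⟨-r + (i+r) % (q^3+q^2), ⟨?_, ?_⟩, (i+r)/(q^3+q^2), ⟨?_, ?_⟩, ?_⟩
      · linarith [Int.emod_nonneg (i+r) hP.ne']
      · linarith [Int.emod_lt_of_pos (i+r) hP]
      · exact Int.ediv_nonneg (by linarith) hP.le
      · apply (Int.le_ediv_iff_mul_le hP).mpr
        have hid : -r + (i+r) % (q^3+q^2) + (q^3+q^2)*((i+r)/(q^3+q^2)) = i := by
          have h9 := Int.mul_ediv_add_emod (i+r) (q^3+q^2)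
          linarith
        have hffs := ff_shiftP hq s t (-r + (i+r) % (q^3+q^2)) ((i+r)/(q^3+q^2))
        rw [hid] at hffs
        linarith
      · have h9 := Int.mul_ediv_add_emod (i+r) (q^3+q^2)
        linear_combination h9
  have hOm : Omega q r s t u = ↑(T.image (fun i => (i, jj q s t i, kk q s i))) := by
    ext p
    simp only [Omega, Set.mem_setOf_eq, Finset.coe_image, Set.mem_image, Finset.mem_coe]
    constructor
    · rintro ⟨c1, c2, c3, c4, c5, c6⟩
      have hk : p.2.2 = kk q s p.1 :=
        kk_uniq hq (by linarith [c2]) (by linarith [c3])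
      have hj : p.2.1 = jj q s t p.1 :=
        jj_uniq hq (by rw [← hk]; linarith [c4]) (by rw [← hk]; linarith [c5])
      have hfs := ff_spec q s t p.1
      rw [← hj, ← hk] at hfs
      refine ⟨p.1, (hmemT p.1).mpr ⟨c1, by linarith⟩, ?_⟩
      rw [← hj, ← hk]
    · rintro ⟨i', hi', rfl⟩
      obtain ⟨h1, h2⟩ := (hmemT i').mp hi'
      have hAb := AA_bounds hq s i'
      have hAe := AA_eq q s i'
      have hBb := BB_bounds hq s t i'
      have hBe := BB_eq q s t i'
      have hfs := ff_spec q s t i'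
      refine ⟨h1, ?_, ?_, ?_, ?_, ?_⟩
      · show -s ≤ i' + (q^2+q) * kk q s i'
        linarith [hAe, hAb.1]
      · show i' + (q^2+q) * kk q s i' < -s + (q^2+q)
        linarith [hAe, hAb.2]
      · show -t ≤ q * i' + (q^2+q) * jj q s t i' + (q+1) * kk q s i'
        linarith [hBe, hBb.1]
      · show q * i' + (q^2+q) * jj q s t i' + (q+1) * kk q s i' < -t + (q^2+q)
        linarith [hBe, hBb.2]
      · show -u ≤ -q^2 * i' - (q^3-q) * jj q s t i' - (q^3+q^2-q-1) * kk q s i'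
        linarith [hfs, h2]
  have hcard1 : (Omega q r s t u).ncard = T.card := by
    rw [hOm, Set.ncard_coe_finset]
    exact Finset.card_image_of_injOn
      (fun a _ b _ h2 => by simpa using congrArg Prod.fst h2)
  have hdisj : ∀ x ∈ Finset.Ico (-r) (-r+(q^3+q^2)), ∀ y ∈ Finset.Ico (-r) (-r+(q^3+q^2)),
      x ≠ y → Disjoint
        ((Finset.Icc (0:ℤ) ((u - ff q s t x)/(q^3+q^2))).image (fun n => x + n*(q^3+q^2)))
        ((Finset.Icc (0:ℤ) ((u - ff q s t y)/(q^3+q^2))).image (fun n => y + n*(q^3+q^2))) := by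
    intro x hx y hy hxy
    simp only [Finset.mem_Ico] at hx hy
    rw [Finset.disjoint_left]
    rintro a ha hb
    simp only [Finset.mem_image, Finset.mem_Icc] at ha hb
    obtain ⟨n, ⟨hn0, _⟩, rfl⟩ := ha
    obtain ⟨n', ⟨hn0', _⟩, he⟩ := hb
    have hdq : x - y = (q^3+q^2)*(n' - n) := by linear_combination - he
    have hz : n' - n = 0 :=
      mul_small hP (by rw [← hdq]; linarith) (by rw [← hdq]; linarith)
    rw [hz, mul_zero] at hdq
    exact hxy (by linarith)
  have hcard2 : T.card = ∑ ρ ∈ Finset.Ico (-r) (-r+(q^3+q^2)),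
      ((u - ff q s t ρ)/(q^3+q^2) + 1).toNat := by
    rw [hT, Finset.card_biUnion hdisj]
    apply Finset.sum_congr rfl
    intro ρ _
    rw [Finset.card_image_of_injOn (fun n _ n' _ h => by
      have h3 : (q^3+q^2)*(n - n') = 0 := by linear_combination h
      have h4 := (mul_eq_zero.mp h3).resolve_left hP.ne'
      linarith), Int.card_Icc]
    congr 1
    ring
  have hnn : ∀ ρ ∈ Finset.Ico (-r) (-r+(q^3+q^2)), 0 ≤ (u - ff q s t ρ)/(q^3+q^2) :=
    fun ρ hρ => Int.ediv_nonneg (by linarith [hffu ρ hρ]) hP.le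
  have hcast : (T.card : ℤ) = ∑ ρ ∈ Finset.Ico (-r) (-r+(q^3+q^2)),
      ((u - ff q s t ρ)/(q^3+q^2) + 1) := by
    rw [hcard2, Nat.cast_sum]
    apply Finset.sum_congr rfl
    intro ρ hρ
    rw [Int.toNat_of_nonneg (by linarith [hnn ρ hρ])]
  set X := ∑ ρ ∈ Finset.Ico (-r) (-r+(q^3+q^2)), ((u - ff q s t ρ)/(q^3+q^2)) with hX
  set SF := ∑ ρ ∈ Finset.Ico (-r) (-r+(q^3+q^2)), ff q s t ρ with hSF
  set T0 := ∑ x ∈ Finset.Ico (0:ℤ) (q^3+q^2), x with hT0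
  set TM := ∑ x ∈ Finset.Ico (0:ℤ) (q^2+q), x with hTM
  set TQ := ∑ x ∈ Finset.Ico (0:ℤ) q, x with hTQ
  set TQ1 := ∑ x ∈ Finset.Ico (0:ℤ) (q+1), x with hTQ1
  have hcP : (((-r+(q^3+q^2)-(-r)).toNat:ℕ):ℤ) = q^3+q^2 := by
    rw [show -r+(q^3+q^2)-(-r) = q^3+q^2 from by ring, Int.toNat_of_nonneg hP.le]
  have E1 : (T.card : ℤ) = X + (q^3+q^2) := by
    rw [hcast, Finset.sum_add_distrib, Finset.sum_const, Int.card_Ico, nsmul_eq_mul,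
      mul_one, hcP, hX]
  have E2 : (q^3+q^2) * X = ((q^3+q^2)*u - SF) - T0 := by
    have hterm : ∀ ρ : ℤ, (q^3+q^2)*((u - ff q s t ρ)/(q^3+q^2))
        = (u - ff q s t ρ) - ((u - ff q s t ρ) % (q^3+q^2)) := by
      intro ρ; rw [Int.emod_def]; ring
    rw [hX, Finset.mul_sum, Finset.sum_congr rfl (fun ρ _ => hterm ρ),
      Finset.sum_sub_distrib, Finset.sum_sub_distrib, Finset.sum_const, Int.card_Ico,
      nsmul_eq_mul, hcP, hSF, hT0]
    have hmod := sum_modP hq s t u (-r)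
    rw [hmod]
  have E3 : SF = ((q^3+q^2)*(-r) + T0)
      + (q-1)*((q*TM - (q^3+q^2)*s)
        + (q*(q*TQ1) + (q^2+q)*((q+1)*TQ) - (q^3+q^2)*t)) := by
    rw [hSF, hT0, hTM, hTQ, hTQ1]
    exact sum_ff hq s t (-r)
  have E4 : 2*T0 = (q^3+q^2)*((q^3+q^2)-1) := two_gauss _ hP.le
  have E5 : 2*TM = (q^2+q)*((q^2+q)-1) := two_gauss _ hM.le
  have E6 : 2*TQ = q*(q-1) := by
    have h5 := two_gauss q (by omega)
    rw [hTQ]; linarith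
  have E7 : 2*TQ1 = (q+1)*((q+1)-1) := two_gauss _ (by omega)
  have hbig : (2*(q^3+q^2)) * ((T.card:ℤ))
      = (2*(q^3+q^2)) * (1 - (q ^ 3 - 2 * q + 1) + r + (q - 1) * s + (q - 1) * t + u) := by
    linear_combination (2*(q^3+q^2))*E1 + 2*E2 - 2*E3 + (-2)*E4 + (-(q*(q-1)))*E5
      + (-((q*q-1)*(q*q+q)))*E6 + (-(q*q*(q-1)))*E7
  rw [hcard1]
  exact mul_left_cancel₀ (by nlinarith : (2*(q^3+q^2)) ≠ (0:ℤ)) hbig
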